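/- If freely reduced words u and v on a_1^{±1}, …, a_m^{±1} represent conjugate elements of F, then there is a word w on a_1^{±1}, …, a_m^{±1} which is a concatenation of a prefix of u^{-1} with a suffix of v such that uw = wv in F. If moreover v is cyclically reduced (that is, vv is reduced), then w may be taken to be a prefix of u^{-1}. -/

import Mathlib

open FreeGroup SemidirectProduct

/-- Words on the letters `a₁^{±1}, …, a_m^{±1}` (`(i, true)` is `a_{i+1}`,
`(i, false)` is `a_{i+1}⁻¹`, with 0-based `Fin`-indexing of the generators). -/
abbrev FWord (m : ℕ) := List (Fin m × Bool)

/-- A word is freely reduced. -/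
def Reduced {m : ℕ} (w : FWord m) : Prop := FreeGroup.reduce w = w

/-- `φ` is the automorphism of `F = F(a₁, …, a_m)` with `φ(a₁) = a₁` and
`φ(aᵢ) = aᵢ aᵢ₋₁` for `2 ≤ i ≤ m`. -/
def IsHydraAut (m : ℕ) (φ : FreeGroup (Fin m) ≃* FreeGroup (Fin m)) : Prop :=
  ∀ i : Fin m, φ (FreeGroup.of i) =
    if i.val = 0 then FreeGroup.of i
    else FreeGroup.of i *
      FreeGroup.of (⟨i.val - 1, Nat.lt_of_le_of_lt (Nat.sub_le _ _) i.isLt⟩ : Fin m)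

/-- The free-by-cyclic group `H_m = F ⋊_φ ℤ`; here `s = inr (ofAdd 1)` and the defining
relation `s⁻¹ aᵢ s = φ(aᵢ)` holds.  The normal form `ũ s^p` is the element
`⟨ũ, Multiplicative.ofAdd p⟩`. -/
abbrev Hgrp (m : ℕ) (φ : FreeGroup (Fin m) ≃* FreeGroup (Fin m)) :=
  FreeGroup (Fin m) ⋊[zpowersHom (MulAut (FreeGroup (Fin m))) φ⁻¹] Multiplicative ℤ

/-- Letters of words over the generators of `H_m`: `some i` is `a_{i+1}`, `none` is `s`. -/
abbrev HWord (m : ℕ) := List (Option (Fin m) × Bool)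

def hLetter {m : ℕ} (φ : FreeGroup (Fin m) ≃* FreeGroup (Fin m)) (x : Option (Fin m) × Bool) :
    Hgrp m φ :=
  match x.1 with
  | some i => cond x.2 (SemidirectProduct.inl (FreeGroup.of i))
      (SemidirectProduct.inl (FreeGroup.of i))⁻¹
  | none => cond x.2 (SemidirectProduct.inr (Multiplicative.ofAdd (1:ℤ)))
      (SemidirectProduct.inr (Multiplicative.ofAdd (1:ℤ)))⁻¹

/-- The element of `H_m` represented by a word on `a₁^{±1}, …, a_m^{±1}, s^{±1}`. -/
def evalH {m : ℕ} (φ : FreeGroup (Fin m) ≃* FreeGroup (Fin m)) (w : HWord m) : Hgrp m φ :=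
  (w.map (hLetter φ)).prod

/-- Word length in `H_m` w.r.t. the generating set `{a₁, …, a_m, s}`. -/
noncomputable def lenH {m : ℕ} (φ : FreeGroup (Fin m) ≃* FreeGroup (Fin m)) (g : Hgrp m φ) : ℕ :=
  sInf {n | ∃ w : HWord m, evalH φ w = g ∧ w.length = n}

/-- Word length in `F` w.r.t. the generating set `{a₁, …, a_m}`. -/
noncomputable def lenF {m : ℕ} (g : FreeGroup (Fin m)) : ℕ :=
  sInf {n | ∃ w : FWord m, FreeGroup.mk w = g ∧ w.length = n}

/-- The rank of a word: the maximal `i` such that `aᵢ^{±1}` occurs in it (a letter with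
`Fin`-index `j` is `a_{j+1}`, so it contributes `j+1`); the empty word has rank `0`. -/
def wrank {m : ℕ} (w : FWord m) : ℕ := (w.map (fun x => x.1.val + 1)).foldr max 0

/-- The four types of rank-`i` pieces: `aᵢ u`, `u aᵢ⁻¹`, `aᵢ u aᵢ⁻¹`, `u`. -/
inductive PieceType | head | tail | both | plain
deriving DecidableEq

/-- `π` is a rank-`i` piece of the given type: `aᵢ u`, `u aᵢ⁻¹`, `aᵢ u aᵢ⁻¹` or `u`,
where `u` is a (possibly empty) word of rank at most `i - 1`.  Pieces of the first three
types have strict rank `i`. -/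
def IsPieceType {m : ℕ} (i : ℕ) (t : PieceType) (π : FWord m) : Prop :=
  match t with
  | .head => ∃ (x : Fin m × Bool) (u : FWord m),
      π = x :: u ∧ x.1.val + 1 = i ∧ x.2 = true ∧ wrank u < i
  | .tail => ∃ (x : Fin m × Bool) (u : FWord m),
      π = u ++ [x] ∧ x.1.val + 1 = i ∧ x.2 = false ∧ wrank u < i
  | .both => ∃ (j : Fin m) (u : FWord m),
      π = (j, true) :: (u ++ [(j, false)]) ∧ j.val + 1 = i ∧ wrank u < i
  | .plain => wrank π < i

def IsPiece {m : ℕ} (i : ℕ) (π : FWord m) : Prop := ∃ t, IsPieceType i t π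

/-- The rank-`i` piece decomposition of `w`: a decomposition into rank-`i` pieces
with the minimal possible number of pieces. -/
def IsPieceDecomp {m : ℕ} (i : ℕ) (w : FWord m) (L : List (FWord m)) : Prop :=
  L.flatten = w ∧ (∀ π ∈ L, IsPiece i π) ∧
    ∀ L' : List (FWord m), L'.flatten = w → (∀ π ∈ L', IsPiece i π) → L.length ≤ L'.length

/-- The number of pieces in the rank-`i` decomposition of `w`, for `i = wrank w`. -/
noncomputable def piecesCount {m : ℕ} (w : FWord m) : ℕ :=
  sInf {p | ∃ L : List (FWord m),
    L.flatten = w ∧ (∀ π ∈ L, IsPiece (wrank w) π) ∧ L.length = p}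

/-- The number of pieces of an element of the free group. -/
noncomputable def piecesCountF {m : ℕ} (g : FreeGroup (Fin m)) : ℕ :=
  piecesCount (FreeGroup.toWord g)

namespace Stmt1Aux

set_option linter.unusedSectionVars false


variable {α : Type*} [DecidableEq α]

/-- Non-cancelling condition on adjacent letters. -/
def NC (p q : α × Bool) : Prop := p.1 = q.1 → q.2 = p.2

lemma not_nc_iff {p q : α × Bool} : ¬ NC p q ↔ q = (p.1, !p.2) := by
  unfold NC
  constructor
  · intro h
    push_neg at h
    obtain ⟨h1, h2⟩ := h
    obtain ⟨q1, q2⟩ := q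
    obtain ⟨p1, p2⟩ := p
    simp_all
    cases q2 <;> cases p2 <;> simp_all
  · rintro rfl
    simp

lemma nc_of_ne {p q : α × Bool} (h : q ≠ (p.1, !p.2)) : NC p q := by
  by_contra hn
  exact h (not_nc_iff.1 hn)

lemma reduce_cons_self {x : α × Bool} {L : List (α × Bool)}
    (h : FreeGroup.reduce (x :: L) = x :: L) : FreeGroup.reduce L = L := by
  have hr : FreeGroup.Red L (FreeGroup.reduce L) := FreeGroup.reduce.red
  have hlen := FreeGroup.Red.length_le hr
  rw [FreeGroup.reduce.cons] at h
  cases hL : FreeGroup.reduce L with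
  | nil =>
    rw [hL] at h
    simp only at h
    have : L = [] := by
      injection h with _ h2
      exact h2.symm
    rw [this]
  | cons hd tl =>
    rw [hL] at h hlen
    dsimp only at h
    by_cases hcond : x.1 = hd.1 ∧ x.2 = !hd.2
    · rw [if_pos hcond] at h
      have h1 := congrArg List.length h
      simp only [List.length_cons] at h1 hlen
      omega
    · rw [if_neg hcond] at h
      have h2 : hd :: tl = L := by injection h
      exact h2

lemma chain'_of_reduced : ∀ (L : List (α × Bool)), FreeGroup.reduce L = L → List.Chain' NC L := by
  intro L
  induction L with
  | nil => intro _; exact List.isChain_nil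
  | cons x L ih =>
    intro h
    have htail := ih (reduce_cons_self h)
    cases L with
    | nil => exact List.isChain_singleton _
    | cons y t =>
      show List.IsChain NC (x :: y :: t)
      rw [List.isChain_cons_cons]
      refine ⟨?_, htail⟩
      by_contra hn
      have hy : y = (x.1, !x.2) := not_nc_iff.1 hn
      apply FreeGroup.reduce.not (L₂ := ([] : List (α × Bool))) (L₃ := t) (x := x.1) (b := x.2)
      rw [h, hy]
      simp

lemma reduced_of_chain' : ∀ (L : List (α × Bool)), List.Chain' NC L → FreeGroup.reduce L = L := by
  intro L
  induction L with
  | nil => intro _; rfl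
  | cons x L ih =>
    intro h
    have hL : FreeGroup.reduce L = L := ih h.tail
    rw [FreeGroup.reduce.cons, hL]
    cases L with
    | nil => rfl
    | cons y t =>
      simp only
      rw [if_neg]
      rintro ⟨h1, h2⟩
      have := (List.isChain_cons_cons.1 h).1 h1
      rw [h2] at this
      simp at this

lemma reduced_iff_chain' {L : List (α × Bool)} :
    FreeGroup.reduce L = L ↔ List.Chain' NC L :=
  ⟨chain'_of_reduced L, reduced_of_chain' L⟩

lemma invRev_append' (L₁ L₂ : List (α × Bool)) :
    FreeGroup.invRev (L₁ ++ L₂) = FreeGroup.invRev L₂ ++ FreeGroup.invRev L₁ := by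
  simp [FreeGroup.invRev]

lemma invRev_cons' (x : α × Bool) (L : List (α × Bool)) :
    FreeGroup.invRev (x :: L) = FreeGroup.invRev L ++ [(x.1, !x.2)] := by
  simp [FreeGroup.invRev]

lemma invRev_singleton' (x : α × Bool) :
    FreeGroup.invRev [x] = [(x.1, !x.2)] := by
  simp [FreeGroup.invRev]

lemma reduced_invRev' {L : List (α × Bool)} (h : FreeGroup.reduce L = L) :
    FreeGroup.reduce (FreeGroup.invRev L) = FreeGroup.invRev L := by
  rw [FreeGroup.reduce_invRev, h]

lemma reduced_infix {L L' : List (α × Bool)} (h : FreeGroup.reduce L = L) (h' : L' <:+: L) :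
    FreeGroup.reduce L' = L' :=
  reduced_of_chain' _ ((chain'_of_reduced _ h).infix h')


lemma chain'_triple {c : List (α × Bool)} (h : List.Chain' NC (c ++ c)) :
    List.Chain' NC (c ++ (c ++ c)) := by
  rcases List.isChain_append.1 h with ⟨h1, _, h3⟩
  refine List.isChain_append.2 ⟨h1, h, ?_⟩
  intro x hx y hy
  rcases c with _ | ⟨z, c'⟩
  · simp at hx
  · rw [List.head?_append_of_ne_nil _ (by simp)] at hy
    exact h3 x hx y hy

lemma reduced_rotate {c : List (α × Bool)} (h : FreeGroup.reduce (c ++ c) = c ++ c) (n : ℕ) :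
    FreeGroup.reduce (c.rotate n ++ c.rotate n) = c.rotate n ++ c.rotate n := by
  rcases eq_or_ne c [] with rfl | hc
  · simp
  · set j := n % c.length with hj
    have hjlt : j < c.length := Nat.mod_lt _ (List.length_pos_iff.2 hc)
    have hrot : c.rotate n = c.drop j ++ c.take j := by
      rw [← List.rotate_mod, List.rotate_eq_drop_append_take hjlt.le]
    apply reduced_of_chain'
    have htriple : List.Chain' NC (c ++ (c ++ c)) := chain'_triple (chain'_of_reduced _ h)
    apply htriple.infix
    have hdec : c.take j ++ c.drop j = c := List.take_append_drop _ _
    refine ⟨c.take j, c.drop j, ?_⟩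
    rw [hrot]
    conv_rhs => rw [← hdec]
    simp only [List.append_assoc]

lemma cyc_decomp : ∀ (n : ℕ) (u : List (α × Bool)), u.length ≤ n → FreeGroup.reduce u = u →
    ∃ p c : List (α × Bool), u = p ++ c ++ FreeGroup.invRev p ∧
      FreeGroup.reduce (c ++ c) = c ++ c := by
  intro n
  induction n with
  | zero =>
    intro u hlen _
    have : u = [] := List.length_eq_zero_iff.1 (Nat.le_zero.1 hlen)
    exact ⟨[], [], by simp [this, FreeGroup.invRev], by simp⟩
  | succ n ih =>
    intro u hlen hu
    rcases u with _ | ⟨x, t⟩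
    · exact ⟨[], [], by simp [FreeGroup.invRev], by simp⟩
    rcases t with _ | ⟨y, t'⟩
    · refine ⟨[], [x], by simp [FreeGroup.invRev], ?_⟩
      apply reduced_of_chain'
      simp [List.Chain', List.isChain_cons_cons, NC]
    · set tt := y :: t' with htt
      have httne : tt ≠ [] := by simp [htt]
      set z := tt.getLast httne with hz
      have htsplit : tt = tt.dropLast ++ [z] := (List.dropLast_append_getLast httne).symm
      by_cases hcase : z = (x.1, !x.2)
      · have hinfix : tt.dropLast <:+: x :: tt := ⟨[x], [z], by rw [List.append_assoc, ← htsplit]; rfl⟩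
        have hred' : FreeGroup.reduce tt.dropLast = tt.dropLast := reduced_infix hu hinfix
        have hlen' : tt.dropLast.length ≤ n := by
          have h1 := congrArg List.length htsplit
          simp only [List.length_append, List.length_cons, List.length_nil] at h1 hlen
          omega
        obtain ⟨p, c, hpc, hc⟩ := ih tt.dropLast hlen' hred'
        refine ⟨x :: p, c, ?_, hc⟩
        rw [invRev_cons']
        calc x :: tt = x :: (tt.dropLast ++ [z]) := by rw [← htsplit]
          _ = x :: (p ++ c ++ FreeGroup.invRev p ++ [(x.1, !x.2)]) := by rw [hpc, hcase]
          _ = x :: p ++ c ++ (FreeGroup.invRev p ++ [(x.1, !x.2)]) := by simp [List.append_assoc]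
      · refine ⟨[], x :: tt, by simp [FreeGroup.invRev], ?_⟩
        apply reduced_of_chain'
        refine List.isChain_append.2 ⟨chain'_of_reduced _ hu, chain'_of_reduced _ hu, ?_⟩
        intro a ha b hb
        have hgl : (x :: tt).getLast? = some z := by
          rw [htsplit, ← List.cons_append, List.getLast?_concat]
        rw [hgl, Option.mem_some_iff] at ha
        rw [List.head?_cons, Option.mem_some_iff] at hb
        rw [← ha, ← hb]
        apply nc_of_ne
        intro hx'
        apply hcase
        rw [hx']
        simp

lemma isRotated_split {β : Type*} {c d : List β} (h : c ~r d) :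
    ∃ c₁ c₂ : List β, c = c₁ ++ c₂ ∧ d = c₂ ++ c₁ := by
  obtain ⟨k, hk⟩ := h
  rcases eq_or_ne c [] with rfl | hc
  · exact ⟨[], [], by simp, by simp [← hk]⟩
  · refine ⟨c.take (k % c.length), c.drop (k % c.length), (List.take_append_drop _ _).symm, ?_⟩
    rw [← hk, ← List.rotate_mod,
      List.rotate_eq_drop_append_take (Nat.mod_lt _ (List.length_pos_iff.2 hc)).le]

lemma eq_of_mk_eq {c d : List (α × Bool)} (h1 : FreeGroup.reduce c = c)
    (h2 : FreeGroup.reduce d = d) (h : FreeGroup.mk c = FreeGroup.mk d) : c = d := by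
  have := FreeGroup.reduce.sound h
  rwa [h1, h2] at this


lemma conj_rotated : ∀ (n : ℕ) (g : FreeGroup α) (c d : List (α × Bool)),
    g.toWord.length ≤ n → FreeGroup.reduce (c ++ c) = c ++ c →
    FreeGroup.reduce (d ++ d) = d ++ d →
    g * FreeGroup.mk c * g⁻¹ = FreeGroup.mk d → c ~r d := by
  intro n
  induction n with
  | zero =>
    intro g c d hlen hc hd heq
    have hg1 : g = 1 := FreeGroup.toWord_eq_nil_iff.1 (List.length_eq_zero_iff.1 (Nat.le_zero.1 hlen))
    rw [hg1, one_mul, inv_one, mul_one] at heq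
    have hcred : FreeGroup.reduce c = c := reduced_infix hc ⟨[], c, by simp⟩
    have hdred : FreeGroup.reduce d = d := reduced_infix hd ⟨[], d, by simp⟩
    rw [eq_of_mk_eq hcred hdred heq]
  | succ n ih =>
    intro g c d hlen hc hd heq
    by_cases hgn : g.toWord.length ≤ n
    · exact ih g c d hgn hc hd heq
    have hwne : g.toWord ≠ [] := by
      intro h0; rw [h0] at hgn; simp at hgn
    set w := g.toWord with hwdef
    have hw : FreeGroup.reduce w = w := g.reduce_toWord
    have hgw : g = FreeGroup.mk w := FreeGroup.mk_toWord.symm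
    set x := w.getLast hwne with hxdef
    set w' := w.dropLast with hw'def
    have hwsplit : w = w' ++ [x] := (List.dropLast_append_getLast hwne).symm
    have hgmk : g = FreeGroup.mk w' * FreeGroup.mk [x] := by
      rw [FreeGroup.mul_mk, ← hwsplit, hgw]
    have hw'red : FreeGroup.reduce w' = w' :=
      reduced_infix hw ⟨[], [x], by simpa using hwsplit.symm⟩
    have hw'len : w'.length ≤ n := by
      have h5 := congrArg List.length hwsplit
      simp only [List.length_append, List.length_cons, List.length_nil] at h5 hlen
      omega
    have hlenw' : (FreeGroup.mk w').toWord.length ≤ n := by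
      rw [FreeGroup.toWord_mk, hw'red]; exact hw'len
    have hxinv : (FreeGroup.mk [x])⁻¹ = FreeGroup.mk [(x.1, !x.2)] := by
      rw [FreeGroup.inv_mk, invRev_singleton']
    have hcred : FreeGroup.reduce c = c := reduced_infix hc ⟨[], c, by simp⟩
    have hdred : FreeGroup.reduce d = d := reduced_infix hd ⟨[], d, by simp⟩
    rcases c with _ | ⟨y, c''⟩
    · have hd1 : FreeGroup.mk d = FreeGroup.mk ([] : List (α × Bool)) := by
        rw [← heq, ← FreeGroup.one_eq_mk]
        group
      have : d = [] := (eq_of_mk_eq hdred (by rfl) hd1)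
      rw [this]
    by_cases h1 : y = (x.1, !x.2)
    · have hceq : FreeGroup.mk (y :: c'') = (FreeGroup.mk [x])⁻¹ * FreeGroup.mk c'' := by
        rw [hxinv, FreeGroup.mul_mk, h1]
        rfl
      set c' := c'' ++ [(x.1, !x.2)] with hc'def
      have hc'mk : FreeGroup.mk c' = FreeGroup.mk c'' * (FreeGroup.mk [x])⁻¹ := by
        rw [hxinv, FreeGroup.mul_mk]
      have hrot1 : (y :: c'').rotate 1 = c' := by
        rw [List.rotate_cons_succ, List.rotate_zero, h1]
      have hc' : FreeGroup.reduce (c' ++ c') = c' ++ c' := by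
        rw [← hrot1]; exact reduced_rotate hc 1
      have heq' : FreeGroup.mk w' * FreeGroup.mk c' * (FreeGroup.mk w')⁻¹ = FreeGroup.mk d := by
        rw [← heq, hgmk, hceq, hc'mk]
        group
      have hra : List.IsRotated (y :: c'') c' := ⟨1, hrot1⟩
      exact hra.trans (ih _ _ _ hlenw' hc' hd heq')
    by_cases h2 : (y :: c'').getLast (List.cons_ne_nil _ _) = x
    · set t := (y :: c'').dropLast with htdef
      have hct : y :: c'' = t ++ [x] := by
        conv_lhs => rw [← List.dropLast_append_getLast (List.cons_ne_nil y c''), h2]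
      set c' := x :: t with hc'def
      have hrot1 : c'.rotate 1 = y :: c'' := by
        rw [hc'def, List.rotate_cons_succ, List.rotate_zero, ← hct]
      have hrb : List.IsRotated c' (y :: c'') := ⟨1, hrot1⟩
      have hrotd : (y :: c'') ~r c' := hrb.symm
      have hc' : FreeGroup.reduce (c' ++ c') = c' ++ c' := by
        obtain ⟨k, hk⟩ := hrotd
        rw [← hk]; exact reduced_rotate hc k
      have hceq : FreeGroup.mk (y :: c'') = FreeGroup.mk t * FreeGroup.mk [x] := by
        rw [FreeGroup.mul_mk, ← hct]
      have hc'mk : FreeGroup.mk c' = FreeGroup.mk [x] * FreeGroup.mk t := by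
        rw [FreeGroup.mul_mk]
        rfl
      have heq' : FreeGroup.mk w' * FreeGroup.mk c' * (FreeGroup.mk w')⁻¹ = FreeGroup.mk d := by
        rw [← heq, hgmk, hceq, hc'mk]
        group
      exact hrotd.trans (ih _ _ _ hlenw' hc' hd heq')
    · exfalso
      set E := w ++ (y :: c'') ++ FreeGroup.invRev w with hEdef
      have hmkE : FreeGroup.mk d = FreeGroup.mk E := by
        rw [← heq, hgw, FreeGroup.inv_mk, FreeGroup.mul_mk, FreeGroup.mul_mk, hEdef]
      have hinvw : FreeGroup.invRev w = (x.1, !x.2) :: FreeGroup.invRev w' := by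
        rw [hwsplit, invRev_append', invRev_singleton']
        rfl
      have hchainE : List.Chain' NC E := by
        rw [hEdef]
        refine List.isChain_append.2 ⟨?_, ?_, ?_⟩
        · refine List.isChain_append.2
            ⟨chain'_of_reduced _ hw, chain'_of_reduced _ hcred, ?_⟩
          intro a ha b hb
          rw [hwsplit, List.getLast?_concat, Option.mem_some_iff] at ha
          rw [List.head?_cons, Option.mem_some_iff] at hb
          rw [← ha, ← hb]
          exact nc_of_ne h1
        · exact chain'_of_reduced _ (reduced_invRev' hw)
        · intro a ha b hb
          rw [List.getLast?_append_of_ne_nil _ (List.cons_ne_nil y c''),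
            List.getLast?_eq_getLast (List.cons_ne_nil y c''), Option.mem_some_iff] at ha
          rw [hinvw, List.head?_cons, Option.mem_some_iff] at hb
          rw [← ha, ← hb]
          apply nc_of_ne
          intro hcontra
          apply h2
          injection hcontra with e1 e2
          exact Prod.ext e1.symm (Bool.not_inj e2).symm
      have hEred : FreeGroup.reduce E = E := reduced_of_chain' _ hchainE
      have hdE : d = E := eq_of_mk_eq hdred hEred hmkE
      obtain ⟨z₀, w₀, hw0⟩ : ∃ z₀ w₀, w = z₀ :: w₀ := by
        cases hcw : w with
        | nil => exact absurd hcw hwne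
        | cons a b => exact ⟨a, b, rfl⟩
      have hheadE : E.head? = some z₀ := by
        rw [hEdef, hw0]
        rfl
      have hlastE : E.getLast? = some ((z₀.1, !z₀.2)) := by
        have h6 : FreeGroup.invRev w = FreeGroup.invRev w₀ ++ [(z₀.1, !z₀.2)] := by
          rw [hw0, invRev_cons']
        rw [hEdef, h6, ← List.append_assoc, List.getLast?_concat]
      have hchain2 := chain'_of_reduced _ hd
      rcases List.isChain_append.1 hchain2 with ⟨-, -, h3⟩
      have hnc := h3 (z₀.1, !z₀.2) (by rw [hdE, hlastE]; rfl) z₀ (by rw [hdE, hheadE]; rfl)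
      have := hnc rfl
      simp at this

end Stmt1Aux


/-- Lemma 2.1, first part: if reduced words `u`, `v` represent conjugate
elements of `F`, there is a conjugating word which is a concatenation of a prefix of `u⁻¹`
with a suffix of `v`; if `v` is cyclically reduced, a prefix of `u⁻¹` suffices. -/
theorem stmt_1 (m : ℕ) (hm : 2 ≤ m)
    (u v : FWord m) (hu : Reduced u) (hv : Reduced v)
    (hconj : IsConj (FreeGroup.mk u) (FreeGroup.mk v)) :
    (∃ w₁ w₂ : FWord m, w₁ <+: FreeGroup.invRev u ∧ w₂ <:+ v ∧
      FreeGroup.mk u * FreeGroup.mk (w₁ ++ w₂) =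
        FreeGroup.mk (w₁ ++ w₂) * FreeGroup.mk v) ∧
    (Reduced (v ++ v) →
      ∃ w₁ : FWord m, w₁ <+: FreeGroup.invRev u ∧
        FreeGroup.mk u * FreeGroup.mk w₁ = FreeGroup.mk w₁ * FreeGroup.mk v) := by
    classical
  have hu' : FreeGroup.reduce u = u := hu
  have hv' : FreeGroup.reduce v = v := hv
  obtain ⟨p, cu, hup, hcu⟩ := Stmt1Aux.cyc_decomp u.length u le_rfl hu'
  obtain ⟨q, cv, hvq, hcv⟩ := Stmt1Aux.cyc_decomp v.length v le_rfl hv'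
  obtain ⟨g, hg⟩ := isConj_iff.1 hconj
  have hmku : FreeGroup.mk u = FreeGroup.mk p * FreeGroup.mk cu * (FreeGroup.mk p)⁻¹ := by
    rw [FreeGroup.inv_mk, FreeGroup.mul_mk, FreeGroup.mul_mk, hup]
  have hmkv : FreeGroup.mk v = FreeGroup.mk q * FreeGroup.mk cv * (FreeGroup.mk q)⁻¹ := by
    rw [FreeGroup.inv_mk, FreeGroup.mul_mk, FreeGroup.mul_mk, hvq]
  constructor
  · have hGconj : ((FreeGroup.mk q)⁻¹ * g * FreeGroup.mk p) * FreeGroup.mk cu *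
        ((FreeGroup.mk q)⁻¹ * g * FreeGroup.mk p)⁻¹ = FreeGroup.mk cv := by
      have step1 : ((FreeGroup.mk q)⁻¹ * g * FreeGroup.mk p) * FreeGroup.mk cu *
          ((FreeGroup.mk q)⁻¹ * g * FreeGroup.mk p)⁻¹
          = (FreeGroup.mk q)⁻¹ *
            (g * (FreeGroup.mk p * FreeGroup.mk cu * (FreeGroup.mk p)⁻¹) * g⁻¹) *
            FreeGroup.mk q := by
        group
      rw [step1, ← hmku, hg, hmkv]
      group
    have hrot := Stmt1Aux.conj_rotated _ ((FreeGroup.mk q)⁻¹ * g * FreeGroup.mk p) cu cv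
      le_rfl hcu hcv hGconj
    obtain ⟨c₁, c₂, hc12, hcv12⟩ := Stmt1Aux.isRotated_split hrot
    refine ⟨p ++ FreeGroup.invRev c₂, FreeGroup.invRev q, ?_, ?_, ?_⟩
    · refine ⟨FreeGroup.invRev c₁ ++ FreeGroup.invRev p, ?_⟩
      rw [hup, hc12]
      simp [Stmt1Aux.invRev_append', FreeGroup.invRev_invRev, List.append_assoc]
    · exact ⟨q ++ cv, by rw [hvq]⟩
    · have hw12 : FreeGroup.mk ((p ++ FreeGroup.invRev c₂) ++ FreeGroup.invRev q)
          = FreeGroup.mk p * (FreeGroup.mk c₂)⁻¹ * (FreeGroup.mk q)⁻¹ := by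
        rw [FreeGroup.inv_mk, FreeGroup.inv_mk, FreeGroup.mul_mk, FreeGroup.mul_mk]
      have hcu2 : FreeGroup.mk cu = FreeGroup.mk c₁ * FreeGroup.mk c₂ := by
        rw [FreeGroup.mul_mk, ← hc12]
      have hcv2 : FreeGroup.mk cv = FreeGroup.mk c₂ * FreeGroup.mk c₁ := by
        rw [FreeGroup.mul_mk, ← hcv12]
      rw [hmku, hmkv, hw12, hcu2, hcv2]
      group
  · intro hvv
    have hvv' : FreeGroup.reduce (v ++ v) = v ++ v := hvv
    have hGconj : (g * FreeGroup.mk p) * FreeGroup.mk cu * (g * FreeGroup.mk p)⁻¹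
        = FreeGroup.mk v := by
      have step1 : (g * FreeGroup.mk p) * FreeGroup.mk cu * (g * FreeGroup.mk p)⁻¹
          = g * (FreeGroup.mk p * FreeGroup.mk cu * (FreeGroup.mk p)⁻¹) * g⁻¹ := by
        group
      rw [step1, ← hmku, hg]
    have hrot := Stmt1Aux.conj_rotated _ (g * FreeGroup.mk p) cu v le_rfl hcu hvv' hGconj
    obtain ⟨c₁, c₂, hc12, hv12⟩ := Stmt1Aux.isRotated_split hrot
    refine ⟨p ++ FreeGroup.invRev c₂, ?_, ?_⟩
    · refine ⟨FreeGroup.invRev c₁ ++ FreeGroup.invRev p, ?_⟩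
      rw [hup, hc12]
      simp [Stmt1Aux.invRev_append', FreeGroup.invRev_invRev, List.append_assoc]
    · have hw1 : FreeGroup.mk (p ++ FreeGroup.invRev c₂)
          = FreeGroup.mk p * (FreeGroup.mk c₂)⁻¹ := by
        rw [FreeGroup.inv_mk, FreeGroup.mul_mk]
      have hcu2 : FreeGroup.mk cu = FreeGroup.mk c₁ * FreeGroup.mk c₂ := by
        rw [FreeGroup.mul_mk, ← hc12]
      have hv2 : FreeGroup.mk v = FreeGroup.mk c₂ * FreeGroup.mk c₁ := by
        rw [FreeGroup.mul_mk, ← hv12]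
      rw [hmku, hw1, hcu2, hv2]
      group
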